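/- Let X be the 5-element poset {a, b, c, g, h} with a < c, b < c, c < g, c < h. The degree sequence of the 1-skeleton of the order polytope O(X) is (6,6,6,6,6,6,6,6) and the degree sequence of the 1-skeleton of the chain polytope C(X) is (5,6,6,6,6,6,6,7). -/

import Mathlib

/-- Indicator vector of a subset `W` of `P` in `ℝ^P`. -/
noncomputable def rho {P : Type*} (W : Set P) : P → ℝ := W.indicator fun _ => 1

/-- The order polytope of a finite poset `P`. -/
def orderPolytope (P : Type*) [Fintype P] [PartialOrder P] : Set (P → ℝ) :=
  {f | (∀ i, 0 ≤ f i ∧ f i ≤ 1) ∧ ∀ i j : P, i ≤ j → f j ≤ f i}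

/-- The chain polytope of a finite poset `P`. -/
def chainPolytope (P : Type*) [Fintype P] [PartialOrder P] : Set (P → ℝ) :=
  {f | (∀ i, 0 ≤ f i) ∧ ∀ C : Finset P, IsMaxChain (· ≤ ·) (C : Set P) → ∑ i ∈ C, f i ≤ 1}

/-- A subset `S` of a poset `P` is connected in `P` if any two of its elements are
joined by a sequence within `S` whose consecutive members are comparable in `P`. -/
def ConnIn {P : Type*} [PartialOrder P] (S : Set P) : Prop :=
  ∀ x ∈ S, ∀ y ∈ S,
    Relation.ReflTransGen (fun u v => u ∈ S ∧ v ∈ S ∧ (u ≤ v ∨ v ≤ u)) x y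

/-- The segment joining `u` and `v` is an edge (one-dimensional face) of `S`. -/
def IsEdgeOf {E : Type*} [AddCommGroup E] [Module ℝ E] (S : Set E) (u v : E) : Prop :=
  u ≠ v ∧ IsExtreme ℝ S (segment ℝ u v)

/-- The set of maximal elements of a subset of a poset. -/
def maxSet {P : Type*} [PartialOrder P] (S : Set P) : Set P :=
  {x | x ∈ S ∧ ∀ y ∈ S, x ≤ y → x = y}

/-- The set of minimal elements of a subset of a poset. -/
def minSet {P : Type*} [PartialOrder P] (S : Set P) : Set P :=
  {x | x ∈ S ∧ ∀ y ∈ S, y ≤ x → x = y}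

/-- The 1-skeleton of the order polytope, combinatorially: vertices are poset
ideals, adjacency is proper inclusion with connected difference. -/
def orderSkeleton (P : Type*) [PartialOrder P] :
    SimpleGraph {I : Set P // IsLowerSet I} :=
  SimpleGraph.fromRel fun I J => I.1 ⊂ J.1 ∧ ConnIn (J.1 \ I.1)

/-- The 1-skeleton of the chain polytope, combinatorially: vertices are antichains,
adjacency is connectedness of the symmetric difference. -/
def chainSkeleton (P : Type*) [PartialOrder P] :
    SimpleGraph {A : Set P // IsAntichain (· ≤ ·) A} :=
  SimpleGraph.fromRel fun A B => ConnIn ((A.1 \ B.1) ∪ (B.1 \ A.1))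

/-- The multiset of vertex degrees of a graph (the degree sequence, up to order). -/
noncomputable def degMultiset {V : Type*} [Fintype V] (G : SimpleGraph V) : Multiset ℕ :=
  Finset.univ.val.map fun v => (G.neighborSet v).ncard

/-- `P` contains the poset `X = {a,b,c,g,h}` with `a<c, b<c, c<g, c<h` as a subposet. -/
def ContainsX (P : Type*) [PartialOrder P] : Prop :=
  ∃ a b c g h : P, a < c ∧ b < c ∧ c < g ∧ c < h ∧
    ¬ a ≤ b ∧ ¬ b ≤ a ∧ ¬ g ≤ h ∧ ¬ h ≤ g

/-- The pair `(I, J)` of poset ideals with `I ⊂ J` and `J \ I` connected in `P`. -/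
def OmegaP {P : Type*} [PartialOrder P] (I J : Set P) : Prop :=
  IsLowerSet I ∧ IsLowerSet J ∧ I ⊂ J ∧ ConnIn (J \ I)

/-- The pair `(A, B)` of distinct antichains with connected symmetric difference. -/
def PsiP {P : Type*} [PartialOrder P] (A B : Set P) : Prop :=
  IsAntichain (· ≤ ·) A ∧ IsAntichain (· ≤ ·) B ∧ A ≠ B ∧ ConnIn ((A \ B) ∪ (B \ A))

/-- First component of the map `Ω → Ψ`: `A = max J`. -/
def FmapA {P : Type*} [PartialOrder P] (_I J : Set P) : Set P := maxSet J

/-- Second component of the map `Ω → Ψ`: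
`B = min(J \ I) ∪ (max I ∩ max J)`, with `min(J \ I) := ∅` when `|J \ I| = 1`. -/
def FmapB {P : Type*} [PartialOrder P] (I J : Set P) : Set P :=
  (if (J \ I).ncard = 1 then ∅ else minSet (J \ I)) ∪ (maxSet I ∩ maxSet J)

noncomputable instance {P : Type*} [Fintype P] [PartialOrder P] :
    Fintype {I : Set P // IsLowerSet I} := Fintype.ofFinite _

noncomputable instance {P : Type*} [Fintype P] [PartialOrder P] :
    Fintype {A : Set P // IsAntichain (· ≤ ·) A} := Fintype.ofFinite _

/-- The five-element poset `X = {a,b,c,g,h}` with `a<c, b<c, c<g, c<h`. -/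
inductive XP | a | b | c | g | h
deriving DecidableEq

instance : Fintype XP :=
  ⟨{XP.a, XP.b, XP.c, XP.g, XP.h}, fun x => by cases x <;> decide⟩

/-- The order relation of `X`. -/
def XP.leB : XP → XP → Bool
  | .a, .a => true | .a, .c => true | .a, .g => true | .a, .h => true
  | .b, .b => true | .b, .c => true | .b, .g => true | .b, .h => true
  | .c, .c => true | .c, .g => true | .c, .h => true
  | .g, .g => true | .h, .h => true
  | _, _ => false

instance : LE XP := ⟨fun x y => XP.leB x y = true⟩

instance : DecidableRel (· ≤ · : XP → XP → Prop) :=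
  fun x y => inferInstanceAs (Decidable (XP.leB x y = true))

instance : PartialOrder XP where
  le_refl := by decide
  le_trans := by decide
  le_antisymm := by decide

-- decidability of ConnIn for coerced finsets

def XFinConn (s : Finset XP) : Prop :=
  ∀ x ∈ s, ∀ y ∈ s, (x ≤ y ∨ y ≤ x) ∨ ∃ z ∈ s, (x ≤ z ∨ z ≤ x) ∧ (z ≤ y ∨ y ≤ z)

def XFinSplit (s : Finset XP) : Prop :=
  ∃ t ∈ s.powerset, t.Nonempty ∧ (∃ y ∈ s, y ∉ t) ∧
    ∀ u ∈ t, ∀ v ∈ s, v ∉ t → ¬(u ≤ v ∨ v ≤ u)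

instance (s : Finset XP) : Decidable (XFinConn s) := by unfold XFinConn; infer_instance
instance (s : Finset XP) : Decidable (XFinSplit s) := by unfold XFinSplit; infer_instance

lemma xfin_total : ∀ s : Finset XP, XFinConn s ∨ XFinSplit s := by decide

lemma connIn_of_xfin {s : Finset XP} (h : XFinConn s) : ConnIn (↑s : Set XP) := by
  intro x hx y hy
  simp only [Finset.mem_coe] at hx hy
  rcases h x hx y hy with hc | ⟨z, hz, h1, h2⟩
  · exact Relation.ReflTransGen.single ⟨hx, hy, hc⟩
  · exact (Relation.ReflTransGen.single ⟨hx, hz, h1⟩).trans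
      (Relation.ReflTransGen.single ⟨hz, hy, h2⟩)

lemma not_connIn_of_split {s : Finset XP} (h : XFinSplit s) : ¬ ConnIn (↑s : Set XP) := by
  rcases h with ⟨t, hts, ⟨x, hxt⟩, ⟨y, hys, hyt⟩, hsplit⟩
  rw [Finset.mem_powerset] at hts
  intro hconn
  have hxs : x ∈ s := hts hxt
  have key : ∀ w, Relation.ReflTransGen
      (fun u v => u ∈ (↑s : Set XP) ∧ v ∈ (↑s : Set XP) ∧ (u ≤ v ∨ v ≤ u)) x w → w ∈ t := by
    intro w hw
    induction hw with
    | refl => exact hxt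
    | tail _ hbc ih =>
      by_contra hct
      exact hsplit _ ih _ hbc.2.1 hct hbc.2.2
  exact hyt (key y (hconn x hxs y hys))

instance (s : Finset XP) : Decidable (ConnIn (↑s : Set XP)) :=
  if h : XFinConn s then isTrue (connIn_of_xfin h)
  else isFalse (not_connIn_of_split ((xfin_total s).resolve_left h))

instance (s : Finset XP) : Decidable (IsLowerSet (↑s : Set XP)) :=
  decidable_of_iff (∀ u v : XP, v ≤ u → u ∈ s → v ∈ s)
    ⟨fun hp u v hv hu => hp u v hv hu, fun hp u v hv hu => hp hv hu⟩

instance (s : Finset XP) : Decidable (IsAntichain (· ≤ ·) (↑s : Set XP)) :=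
  decidable_of_iff (∀ u ∈ s, ∀ v ∈ s, u ≠ v → ¬ u ≤ v)
    ⟨fun hp u hu v hv huv => hp u hu v hv huv, fun hp u hu v hv huv => hp hu hv huv⟩

-- degMultiset is invariant under comap by an equiv
lemma degMultiset_comap {V W : Type*} [Fintype V] [Fintype W] (e : V ≃ W)
    (G : SimpleGraph W) : degMultiset (G.comap e) = degMultiset G := by
  have hN : ∀ v : V, ((G.comap e).neighborSet v).ncard = (G.neighborSet (e v)).ncard := by
    intro v
    have : (G.comap e).neighborSet v = e ⁻¹' (G.neighborSet (e v)) := rfl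
    rw [this, show ⇑e ⁻¹' G.neighborSet (e v) = ⇑e.symm '' G.neighborSet (e v) from by
      ext w; simp [Equiv.symm_apply_eq, eq_comm],
      Set.ncard_image_of_injective _ e.symm.injective]
  unfold degMultiset
  simp_rw [hN]
  have : (Finset.univ.val.map fun v : V => (G.neighborSet (e v)).ncard)
      = (Finset.univ.val.map e).map fun w => (G.neighborSet w).ncard := by
    rw [Multiset.map_map]; rfl
  rw [this]
  congr 1
  have := congrArg Finset.val (Finset.map_univ_equiv e)
  simpa using this

-- the equivs
noncomputable def eOrd : {s : Finset XP // IsLowerSet (↑s : Set XP)} ≃ {I : Set XP // IsLowerSet I} where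
  toFun s := ⟨↑s.1, s.2⟩
  invFun I := ⟨(Set.toFinite I.1).toFinset, by
    simpa [Set.Finite.coe_toFinset] using I.2⟩
  left_inv s := by
    apply Subtype.ext; apply Finset.coe_injective; simp [Set.Finite.coe_toFinset]
  right_inv I := by
    apply Subtype.ext; simp [Set.Finite.coe_toFinset]

noncomputable def eCh : {s : Finset XP // IsAntichain (· ≤ ·) (↑s : Set XP)} ≃
    {A : Set XP // IsAntichain (· ≤ ·) A} where
  toFun s := ⟨↑s.1, s.2⟩
  invFun A := ⟨(Set.toFinite A.1).toFinset, by
    simpa [Set.Finite.coe_toFinset] using A.2⟩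
  left_inv s := by
    apply Subtype.ext; apply Finset.coe_injective; simp [Set.Finite.coe_toFinset]
  right_inv A := by
    apply Subtype.ext; simp [Set.Finite.coe_toFinset]

noncomputable instance : DecidableRel ((orderSkeleton XP).comap eOrd).Adj := fun s t =>
  decidable_of_iff (s.1 ≠ t.1 ∧ ((s.1 ⊂ t.1 ∧ ConnIn (↑(t.1 \ s.1) : Set XP)) ∨
      (t.1 ⊂ s.1 ∧ ConnIn (↑(s.1 \ t.1) : Set XP)))) (by
    simp only [SimpleGraph.comap_adj, orderSkeleton, SimpleGraph.fromRel_adj, eOrd,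
      Equiv.coe_fn_mk, ne_eq, Subtype.mk.injEq, Finset.coe_inj, Finset.coe_sdiff,
      Finset.coe_ssubset]
    try tauto)

noncomputable instance : DecidableRel ((chainSkeleton XP).comap eCh).Adj := fun s t =>
  decidable_of_iff (s.1 ≠ t.1 ∧ (ConnIn (↑((s.1 \ t.1) ∪ (t.1 \ s.1)) : Set XP) ∨
      ConnIn (↑((t.1 \ s.1) ∪ (s.1 \ t.1)) : Set XP))) (by
    simp only [SimpleGraph.comap_adj, chainSkeleton, SimpleGraph.fromRel_adj, eCh,
      Equiv.coe_fn_mk, ne_eq, Subtype.mk.injEq, Finset.coe_inj, Finset.coe_sdiff,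
      Finset.coe_union]
    try tauto)

lemma degMultiset_eq_degrees {V : Type*} [Fintype V] (G : SimpleGraph V)
    [DecidableRel G.Adj] :
    degMultiset G = Finset.univ.val.map fun v => G.degree v := by
  unfold degMultiset
  congr 1
  funext v
  rw [Set.ncard_eq_toFinset_card']
  rfl

lemma ordCalc : degMultiset ((orderSkeleton XP).comap eOrd)
    = ({6, 6, 6, 6, 6, 6, 6, 6} : Multiset ℕ) := by
  rw [degMultiset_eq_degrees]
  decide

lemma chCalc : degMultiset ((chainSkeleton XP).comap eCh)
    = ({5, 6, 6, 6, 6, 6, 6, 7} : Multiset ℕ) := by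
  rw [degMultiset_eq_degrees]
  decide

theorem stmt16 :
    degMultiset (orderSkeleton XP) = ({6, 6, 6, 6, 6, 6, 6, 6} : Multiset ℕ) ∧
    degMultiset (chainSkeleton XP) = ({5, 6, 6, 6, 6, 6, 6, 7} : Multiset ℕ) :=
  ⟨(degMultiset_comap eOrd (orderSkeleton XP)).symm.trans ordCalc,
   (degMultiset_comap eCh (chainSkeleton XP)).symm.trans chCalc⟩
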